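/- Let (i_1,…,i_m) be a valid firing sequence in the Modified Kostant Game with active set I, let c^{(λ)} denote the configuration after the first λ moves, and set w_λ = s_{i_λ} ⋯ s_{i_1} (with w_0 = id). Then for every step λ, the total number of chips increases by exactly the I-height of the positive coroot w_{λ-1}^{-1}(α_{i_λ}^∨): |c^{(λ)}| − |c^{(λ-1)}| = ht_I(w_{λ-1}^{-1}(α_{i_λ}^∨)), and this quantity is a strictly positive integer. -/

import Mathlib

open scoped Classical RealInnerProductSpace

noncomputable section

variable {n d : ℕ}

/-- The pairing `⟨β, γ^∨⟩ = 2(β,γ)/(γ,γ)` of a vector with a coroot. -/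
def rsPair (β γ : EuclideanSpace ℝ (Fin d)) : ℝ := 2 * ⟪β, γ⟫ / ⟪γ, γ⟫

/-- The coroot `γ^∨ = 2γ/(γ,γ)`. -/
def rsCoroot (γ : EuclideanSpace ℝ (Fin d)) : EuclideanSpace ℝ (Fin d) :=
  (2 / ⟪γ, γ⟫) • γ

/-- `⟨·, γ^∨⟩` as a linear functional. -/
def corootForm (γ : EuclideanSpace ℝ (Fin d)) : EuclideanSpace ℝ (Fin d) →ₗ[ℝ] ℝ where
  toFun x := 2 * ⟪x, γ⟫ / ⟪γ, γ⟫
  map_add' x y := by simp only [inner_add_left]; ring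
  map_smul' c x := by simp only [real_inner_smul_left, RingHom.id_apply, smul_eq_mul]; ring

/-- A finite reduced crystallographic root system in the Euclidean space `ℝ^d`, together with a
chosen base of simple roots `α 0, …, α (n-1)`: every root is an integral linear combination of
the simple roots with all coefficients nonnegative or all nonpositive. -/
structure RootSystemBase (n d : ℕ) : Type where
  Φ : Finset (EuclideanSpace ℝ (Fin d))
  α : Fin n → EuclideanSpace ℝ (Fin d)
  α_mem : ∀ i, α i ∈ Φ
  nonzero : ∀ β ∈ Φ, β ≠ 0
  reduced : ∀ β ∈ Φ, ∀ t : ℝ, t • β ∈ Φ → t = 1 ∨ t = -1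
  crystallographic : ∀ β ∈ Φ, ∀ γ ∈ Φ, ∃ k : ℤ, rsPair β γ = (k : ℝ)
  reflClosed : ∀ β ∈ Φ, ∀ γ ∈ Φ, β - rsPair β γ • γ ∈ Φ
  indep : LinearIndependent ℝ α
  base : ∀ β ∈ Φ, ∃ c : Fin n → ℤ,
    β = ∑ i, (c i : ℝ) • α i ∧ ((∀ i, 0 ≤ c i) ∨ (∀ i, c i ≤ 0))

/-- The extended space `E' = E ⊕ ℝ^I`. -/
abbrev ExtSp (n d : ℕ) (I : Finset (Fin n)) : Type :=
  EuclideanSpace ℝ (Fin d) × ({p : Fin n // p ∈ I} → ℝ)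

/-- The total source vector `β = ∑_{p ∈ I} β_p` in the extended space. -/
def betaVec (n d : ℕ) (I : Finset (Fin n)) : ExtSp n d I := (0, fun _ => 1)

namespace RootSystemBase

variable (R : RootSystemBase n d)

lemma alpha_ne_zero (i : Fin n) : R.α i ≠ 0 := R.nonzero _ (R.α_mem i)

lemma inner_alpha_ne_zero (i : Fin n) : ⟪R.α i, R.α i⟫ ≠ 0 := fun h =>
  R.alpha_ne_zero i ((inner_self_eq_zero (𝕜 := ℝ)).mp h)

lemma corootForm_alpha_self (i : Fin n) : corootForm (R.α i) (R.α i) = 2 := by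
  have h2 := R.inner_alpha_ne_zero i
  show 2 * ⟪R.α i, R.α i⟫ / ⟪R.α i, R.α i⟫ = 2
  rw [mul_div_assoc, div_self h2, mul_one]

/-- The simple reflection `s_i : x ↦ x - ⟨x, α_i^∨⟩ α_i` as a linear automorphism of `E`. -/
def sRefl (i : Fin n) :
    EuclideanSpace ℝ (Fin d) ≃ₗ[ℝ] EuclideanSpace ℝ (Fin d) :=
  Module.reflection (R.corootForm_alpha_self i)

/-- The Weyl group `W`, as the subgroup of linear automorphisms of `E` generated by the
simple reflections. -/
def weyl : Subgroup (EuclideanSpace ℝ (Fin d) ≃ₗ[ℝ] EuclideanSpace ℝ (Fin d)) :=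
  Subgroup.closure (Set.range R.sRefl)

/-- `wordProd [i₁, …, i_t] = s_{i₁} ⋯ s_{i_t}`. -/
def wordProd (l : List (Fin n)) :
    EuclideanSpace ℝ (Fin d) ≃ₗ[ℝ] EuclideanSpace ℝ (Fin d) :=
  (l.map R.sRefl).prod

/-- The Weyl group element `s_{i_t} ⋯ s_{i_1}` associated to the firing sequence
`(i_1, …, i_t)`. -/
def seqProd (l : List (Fin n)) :
    EuclideanSpace ℝ (Fin d) ≃ₗ[ℝ] EuclideanSpace ℝ (Fin d) :=
  (l.reverse.map R.sRefl).prod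

/-- The length function `ℓ` of the Coxeter system `(W, S)`: the minimal number of simple
reflections needed to express `w`. -/
def len (w : EuclideanSpace ℝ (Fin d) ≃ₗ[ℝ] EuclideanSpace ℝ (Fin d)) : ℕ :=
  sInf {t | ∃ l : List (Fin n), l.length = t ∧ R.wordProd l = w}

/-- The set `W^J` of minimal length representatives of `W/W_J`, for `J = S \ {s_i : i ∈ I}`:
those `w ∈ W` with `ℓ(w s_j) > ℓ(w)` for all `j ∉ I`. -/
def minReps (I : Finset (Fin n)) :
    Set (EuclideanSpace ℝ (Fin d) ≃ₗ[ℝ] EuclideanSpace ℝ (Fin d)) :=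
  {w | w ∈ R.weyl ∧ ∀ j, j ∉ I → R.len w < R.len (w * R.sRefl j)}

/-- The Cartan matrix `a_{uv} = ⟨α_u, α_v^∨⟩` (an integer by crystallinity). -/
def cartan (u v : Fin n) : ℤ := ⌊rsPair (R.α u) (R.α v)⌋

/-- The set `Φ⁺` of positive roots. -/
def posRoots : Finset (EuclideanSpace ℝ (Fin d)) :=
  R.Φ.filter fun β => ∃ c : Fin n → ℤ, β = ∑ i, (c i : ℝ) • R.α i ∧ ∀ i, 0 ≤ c i

/-- The set `Φ_P⁺` of positive roots lying in the span of the simple roots `α_j`, `j ∈ P`. -/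
def parPos (P : Finset (Fin n)) : Finset (EuclideanSpace ℝ (Fin d)) :=
  R.posRoots.filter fun β => β ∈ Submodule.span ℝ (R.α '' (P : Set (Fin n)))

/-- `∑_{u ≠ v} (−a_{uv}) c_u + [v ∈ I]`. -/
def chipBound (I : Finset (Fin n)) (c : Fin n → ℤ) (v : Fin n) : ℤ :=
  (∑ u ∈ Finset.univ.erase v, -(R.cartan u v) * c u) + (if v ∈ I then 1 else 0)

/-- Vertex `v` is sad in the configuration `c` (Modified Kostant Game with active set `I`). -/
def Sad (I : Finset (Fin n)) (c : Fin n → ℤ) (v : Fin n) : Prop :=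
  2 * c v < R.chipBound I c v

/-- Firing vertex `v`. -/
def fire (I : Finset (Fin n)) (c : Fin n → ℤ) (v : Fin n) : Fin n → ℤ :=
  Function.update c v (R.chipBound I c v - c v)

end RootSystemBase

/-- `ValidFrom R I c l`: starting from the configuration `c`, the sequence `l` fires a sad
vertex at each step. -/
def RootSystemBase.ValidFrom (R : RootSystemBase n d) (I : Finset (Fin n)) :
    (Fin n → ℤ) → List (Fin n) → Prop
  | _, [] => True
  | c, v :: l => R.Sad I c v ∧ RootSystemBase.ValidFrom R I (R.fire I c v) l

namespace RootSystemBase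

variable (R : RootSystemBase n d)

/-- A valid firing sequence: starts at the zero configuration and fires a sad vertex at
each step. -/
def Valid (I : Finset (Fin n)) (l : List (Fin n)) : Prop := R.ValidFrom I 0 l

/-- The configuration reached after playing the sequence `l` from the zero configuration. -/
def play (I : Finset (Fin n)) (l : List (Fin n)) : Fin n → ℤ :=
  l.foldl (R.fire I) 0

/-- A maximal valid firing sequence: no vertex is sad in the final configuration. -/
def MaximalSeq (I : Finset (Fin n)) (l : List (Fin n)) : Prop :=
  R.Valid I l ∧ ∀ v, ¬ R.Sad I (R.play I l) v

/-- The (integer) coefficients of a vector in the basis of simple coroots, when they exist. -/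
def corootCoeffs (x : EuclideanSpace ℝ (Fin d)) : Fin n → ℤ :=
  if h : ∃ k : Fin n → ℤ, x = ∑ j, (k j : ℝ) • rsCoroot (R.α j) then h.choose else 0

/-- The `I`-height of a (co)vector: the sum over `j ∈ I` of its coefficients in the basis
of simple coroots. -/
def htI (I : Finset (Fin n)) (x : EuclideanSpace ℝ (Fin d)) : ℤ :=
  ∑ j ∈ I, R.corootCoeffs x j

end RootSystemBase

/-- The extended pairing `⟨·, α_i^∨⟩` on `E' = E ⊕ ℝ^I`, determined by
`⟨β_p, α_i^∨⟩ = −δ_{pi}`, as a linear functional. -/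
def extForm (R : RootSystemBase n d) (I : Finset (Fin n)) (i : Fin n) :
    ExtSp n d I →ₗ[ℝ] ℝ :=
  (corootForm (R.α i)).comp (LinearMap.fst ℝ _ _) -
    (if h : i ∈ I then
      (LinearMap.proj (R := ℝ) (φ := fun _ : {p : Fin n // p ∈ I} => ℝ) ⟨i, h⟩).comp
        (LinearMap.snd ℝ _ _)
    else 0)

namespace RootSystemBase

variable (R : RootSystemBase n d)

lemma extForm_apply (I : Finset (Fin n)) (i : Fin n) (x : ExtSp n d I) :
    extForm R I i x = corootForm (R.α i) x.1 - (if h : i ∈ I then x.2 ⟨i, h⟩ else 0) := by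
  by_cases h : i ∈ I <;> simp [extForm, h]

lemma extForm_alpha (I : Finset (Fin n)) (i : Fin n) :
    extForm R I i ((R.α i, 0) : ExtSp n d I) = 2 := by
  rw [R.extForm_apply]
  simp [R.corootForm_alpha_self i]

/-- The simple reflection `s_i : x ↦ x − ⟨x, α_i^∨⟩ α_i` on the extended space `E'`. -/
def extRefl (I : Finset (Fin n)) (i : Fin n) : ExtSp n d I ≃ₗ[ℝ] ExtSp n d I :=
  Module.reflection (R.extForm_alpha I i)

/-- The extended pairing `⟨x, α_i^∨⟩` for `x ∈ E'`. -/
def extPair (I : Finset (Fin n)) (x : ExtSp n d I) (i : Fin n) : ℝ := extForm R I i x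

/-- The action of `s_{i_t} ⋯ s_{i_1}` on the extended space `E'`. -/
def extSeqProd (I : Finset (Fin n)) (l : List (Fin n)) : ExtSp n d I ≃ₗ[ℝ] ExtSp n d I :=
  (l.reverse.map (R.extRefl I)).prod

end RootSystemBase


section Aux

lemma LinearEquiv.mulApply (e₁ e₂ : EuclideanSpace ℝ (Fin d) ≃ₗ[ℝ] EuclideanSpace ℝ (Fin d))
    (x : EuclideanSpace ℝ (Fin d)) : (e₁ * e₂) x = e₁ (e₂ x) := rfl

lemma LinearEquiv.oneApply (x : EuclideanSpace ℝ (Fin d)) :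
    (1 : EuclideanSpace ℝ (Fin d) ≃ₗ[ℝ] EuclideanSpace ℝ (Fin d)) x = x := rfl

lemma corootForm_apply (γ x : EuclideanSpace ℝ (Fin d)) :
    corootForm γ x = 2 * ⟪x, γ⟫ / ⟪γ, γ⟫ := rfl

namespace RootSystemBase

variable (R : RootSystemBase n d)

lemma rsPair_eq_cartan (u v : Fin n) : rsPair (R.α u) (R.α v) = (R.cartan u v : ℝ) := by
  obtain ⟨k, hk⟩ := R.crystallographic _ (R.α_mem u) _ (R.α_mem v)
  rw [cartan, hk, Int.floor_intCast]

lemma cartan_self (v : Fin n) : R.cartan v v = 2 := by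
  have h : rsPair (R.α v) (R.α v) = 2 := by
    rw [rsPair, mul_div_assoc, div_self (R.inner_alpha_ne_zero v), mul_one]
  have := R.rsPair_eq_cartan v v
  rw [h] at this
  exact_mod_cast this.symm

lemma sRefl_apply (i : Fin n) (x : EuclideanSpace ℝ (Fin d)) :
    R.sRefl i x = x - corootForm (R.α i) x • R.α i :=
  Module.reflection_apply _ _

lemma inner_sRefl (i : Fin n) (x y : EuclideanSpace ℝ (Fin d)) :
    ⟪R.sRefl i x, R.sRefl i y⟫ = ⟪x, y⟫ := by
  have hq := R.inner_alpha_ne_zero i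
  rw [R.sRefl_apply, R.sRefl_apply, inner_sub_left, inner_sub_right, inner_sub_right,
    real_inner_smul_left, real_inner_smul_left, real_inner_smul_right, real_inner_smul_right,
    corootForm_apply, corootForm_apply]
  rw [real_inner_comm (R.α i) y, real_inner_comm (R.α i) x]
  set q : ℝ := ⟪R.α i, R.α i⟫ with hqdef
  set a : ℝ := ⟪x, R.α i⟫
  set b : ℝ := ⟪y, R.α i⟫
  field_simp
  ring

lemma sRefl_mem (i : Fin n) {β : EuclideanSpace ℝ (Fin d)} (hβ : β ∈ R.Φ) :
    R.sRefl i β ∈ R.Φ := by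
  rw [R.sRefl_apply]
  exact R.reflClosed β hβ _ (R.α_mem i)

lemma sRefl_mul_self (i : Fin n) : R.sRefl i * R.sRefl i = 1 :=
  LinearEquiv.ext fun x => Module.involutive_reflection (R.corootForm_alpha_self i) x

lemma sRefl_inv (i : Fin n) : (R.sRefl i)⁻¹ = R.sRefl i :=
  inv_eq_of_mul_eq_one_right (R.sRefl_mul_self i)

lemma sRefl_coroot (i : Fin n) (γ : EuclideanSpace ℝ (Fin d)) :
    R.sRefl i (rsCoroot γ) = rsCoroot (R.sRefl i γ) := by
  unfold rsCoroot
  rw [map_smul, R.inner_sRefl i γ γ]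

lemma sRefl_coroot_alpha (i v : Fin n) :
    R.sRefl i (rsCoroot (R.α v)) =
      rsCoroot (R.α v) - (R.cartan i v : ℝ) • rsCoroot (R.α i) := by
  rw [← R.rsPair_eq_cartan i v, R.sRefl_apply]
  unfold rsCoroot rsPair
  rw [map_smul, smul_eq_mul, smul_smul, corootForm_apply,
    real_inner_comm (R.α v) (R.α i)]
  congr 2
  have hi := R.inner_alpha_ne_zero i
  have hv := R.inner_alpha_ne_zero v
  set qi : ℝ := ⟪R.α i, R.α i⟫
  set qv : ℝ := ⟪R.α v, R.α v⟫
  set p : ℝ := ⟪R.α i, R.α v⟫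
  field_simp

lemma seqProd_nil : R.seqProd ([] : List (Fin n)) = 1 := rfl

lemma seqProd_append_singleton (l : List (Fin n)) (i : Fin n) :
    R.seqProd (l ++ [i]) = R.sRefl i * R.seqProd l := by
  unfold seqProd
  rw [List.reverse_append]
  simp [List.prod_cons]

lemma seqProd_inv_append (l : List (Fin n)) (i : Fin n) :
    (R.seqProd (l ++ [i]))⁻¹ = (R.seqProd l)⁻¹ * R.sRefl i := by
  rw [R.seqProd_append_singleton, mul_inv_rev, R.sRefl_inv]

lemma seqProdInv_mem (l : List (Fin n)) {β : EuclideanSpace ℝ (Fin d)} (hβ : β ∈ R.Φ) :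
    (R.seqProd l)⁻¹ β ∈ R.Φ := by
  induction l using List.reverseRecOn generalizing β with
  | nil => rw [R.seqProd_nil, inv_one]; exact hβ
  | append_singleton l i ih =>
    rw [R.seqProd_inv_append, LinearEquiv.mulApply]
    exact ih (R.sRefl_mem i hβ)

lemma inner_seqProdInv (l : List (Fin n)) (x y : EuclideanSpace ℝ (Fin d)) :
    ⟪(R.seqProd l)⁻¹ x, (R.seqProd l)⁻¹ y⟫ = ⟪x, y⟫ := by
  induction l using List.reverseRecOn generalizing x y with
  | nil => rw [R.seqProd_nil, inv_one, LinearEquiv.oneApply, LinearEquiv.oneApply]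
  | append_singleton l i ih =>
    rw [R.seqProd_inv_append, LinearEquiv.mulApply, LinearEquiv.mulApply, ih, R.inner_sRefl]

lemma seqProdInv_coroot (l : List (Fin n)) (γ : EuclideanSpace ℝ (Fin d)) :
    (R.seqProd l)⁻¹ (rsCoroot γ) = rsCoroot ((R.seqProd l)⁻¹ γ) := by
  unfold rsCoroot
  rw [map_smul, R.inner_seqProdInv l γ γ]

lemma play_nil (I : Finset (Fin n)) : R.play I ([] : List (Fin n)) = 0 := rfl

lemma play_append_singleton (I : Finset (Fin n)) (l : List (Fin n)) (i : Fin n) :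
    R.play I (l ++ [i]) = R.fire I (R.play I l) i := by
  unfold play
  rw [List.foldl_append]
  rfl

lemma chipBound_zero (I : Finset (Fin n)) (v : Fin n) :
    R.chipBound I (0 : Fin n → ℤ) v = if v ∈ I then 1 else 0 := by
  simp [chipBound]

lemma fire_self (I : Finset (Fin n)) (c : Fin n → ℤ) (i : Fin n) :
    R.fire I c i i = R.chipBound I c i - c i := by
  simp [fire]

lemma fire_ne (I : Finset (Fin n)) (c : Fin n → ℤ) {i v : Fin n} (hvi : v ≠ i) :
    R.fire I c i v = c v := by
  simp [fire, Function.update_of_ne hvi]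

lemma chipBound_fire_self (I : Finset (Fin n)) (c : Fin n → ℤ) (i : Fin n) :
    R.chipBound I (R.fire I c i) i = R.chipBound I c i := by
  unfold chipBound
  congr 1
  refine Finset.sum_congr rfl fun u hu => ?_
  rw [R.fire_ne I c (Finset.mem_erase.1 hu).1]

lemma chipBound_fire_ne (I : Finset (Fin n)) (c : Fin n → ℤ) {i v : Fin n} (hvi : v ≠ i) :
    R.chipBound I (R.fire I c i) v =
      R.chipBound I c v - R.cartan i v * (R.chipBound I c i - 2 * c i) := by
  have hmem : i ∈ Finset.univ.erase v := Finset.mem_erase.2 ⟨(Ne.symm hvi), Finset.mem_univ i⟩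
  have h1 : ∑ u ∈ Finset.univ.erase v,
      (-R.cartan u v * R.fire I c i u - -R.cartan u v * c u)
      = -(R.cartan i v * (R.chipBound I c i - 2 * c i)) := by
    rw [Finset.sum_eq_single_of_mem i hmem]
    · rw [R.fire_self]; ring
    · intro u _ hui
      rw [R.fire_ne I c hui]; ring
  rw [Finset.sum_sub_distrib] at h1
  have h2 : R.chipBound I (R.fire I c i) v - R.chipBound I c v
      = (∑ u ∈ Finset.univ.erase v, -R.cartan u v * R.fire I c i u)
        - ∑ u ∈ Finset.univ.erase v, -R.cartan u v * c u := by
    unfold chipBound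
    ring
  linarith [h1, h2]

lemma coroot_linearIndependent :
    LinearIndependent ℝ (fun j => rsCoroot (R.α j)) := by
  have h := R.indep.units_smul
    (fun j => Units.mk0 (2 / ⟪R.α j, R.α j⟫)
      (div_ne_zero two_ne_zero (R.inner_alpha_ne_zero j)))
  convert h using 1
  funext j; rfl

lemma coeff_unique {k k' : Fin n → ℤ}
    (h : ∑ j, (k j : ℝ) • rsCoroot (R.α j) = ∑ j, (k' j : ℝ) • rsCoroot (R.α j)) :
    k = k' := by
  have h0 : ∑ j, ((k j : ℝ) - (k' j : ℝ)) • rsCoroot (R.α j) = 0 := by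
    simp only [sub_smul]
    rw [Finset.sum_sub_distrib, h, sub_self]
  have h2 := Fintype.linearIndependent_iff.1 R.coroot_linearIndependent _ h0
  funext j
  have := h2 j
  have : (k j : ℝ) = (k' j : ℝ) := by linarith [this]
  exact_mod_cast this

lemma alpha_coeff_unique {k k' : Fin n → ℝ}
    (h : ∑ j, k j • R.α j = ∑ j, k' j • R.α j) : k = k' := by
  have h0 : ∑ j, (k j - k' j) • R.α j = 0 := by
    simp only [sub_smul]
    rw [Finset.sum_sub_distrib, h, sub_self]
  have h2 := Fintype.linearIndependent_iff.1 R.indep _ h0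
  funext j
  have := h2 j
  linarith [this]

lemma htI_rep (I : Finset (Fin n)) {x : EuclideanSpace ℝ (Fin d)} {k : Fin n → ℤ}
    (hx : x = ∑ j, (k j : ℝ) • rsCoroot (R.α j)) :
    R.htI I x = ∑ j ∈ I, k j := by
  have hex : ∃ k0 : Fin n → ℤ, x = ∑ j, (k0 j : ℝ) • rsCoroot (R.α j) := ⟨k, hx⟩
  unfold htI corootCoeffs
  rw [dif_pos hex]
  have heq : hex.choose = k := R.coeff_unique (hex.choose_spec.symm.trans hx)
  rw [heq]

/-- The main invariant of the modified Kostant game. -/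
lemma main_inv (I : Finset (Fin n)) (l : List (Fin n)) (v : Fin n) :
    ∃ k : Fin n → ℤ,
      (R.seqProd l)⁻¹ (rsCoroot (R.α v)) = ∑ j, (k j : ℝ) • rsCoroot (R.α j) ∧
      R.chipBound I (R.play I l) v - 2 * R.play I l v = ∑ j ∈ I, k j := by
  induction l using List.reverseRecOn generalizing v with
  | nil =>
    refine ⟨fun j => if j = v then 1 else 0, ?_, ?_⟩
    · rw [R.seqProd_nil, inv_one, LinearEquiv.oneApply]
      rw [Finset.sum_congr rfl (fun j _ => by
        rw [show (((if j = v then 1 else 0 : ℤ) : ℝ)) = (if j = v then (1:ℝ) else 0) by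
          split <;> simp, ite_smul, one_smul, zero_smul])]
      rw [Finset.sum_ite_eq' Finset.univ v (fun j => rsCoroot (R.α j))]
      simp
    · rw [R.play_nil, R.chipBound_zero]
      rw [Finset.sum_ite_eq' I v (fun _ => (1:ℤ))]
      simp
  | append_singleton l i ih =>
    obtain ⟨kv, hkv, hbv⟩ := ih v
    obtain ⟨ki, hki, hbi⟩ := ih i
    refine ⟨fun j => kv j - R.cartan i v * ki j, ?_, ?_⟩
    · rw [R.seqProd_inv_append, LinearEquiv.mulApply, R.sRefl_coroot_alpha, map_sub, map_smul,
        hkv, hki, Finset.smul_sum, ← Finset.sum_sub_distrib]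
      refine Finset.sum_congr rfl fun j _ => ?_
      rw [smul_smul]
      push_cast
      rw [sub_smul]
    · rw [R.play_append_singleton]
      beta_reduce
      by_cases hvi : v = i
      · subst hvi
        have hk : ki = kv := R.coeff_unique (hki.symm.trans hkv)
        subst hk
        rw [R.chipBound_fire_self, R.fire_self, R.cartan_self]
        have hred : ∑ j ∈ I, (ki j - 2 * ki j) = ∑ j ∈ I, ki j - 2 * ∑ j ∈ I, ki j := by
          rw [Finset.sum_sub_distrib, Finset.mul_sum]
        omega
      · rw [R.chipBound_fire_ne I _ hvi, R.fire_ne I _ hvi]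
        have hred : ∑ j ∈ I, (kv j - R.cartan i v * ki j)
            = ∑ j ∈ I, kv j - R.cartan i v * ∑ j ∈ I, ki j := by
          rw [Finset.sum_sub_distrib, Finset.mul_sum]
        rw [hred, ← hbv, ← hbi]
        ring

lemma sad_of_validFrom (I : Finset (Fin n)) (l₂ : List (Fin n)) (v : Fin n) :
    ∀ (l₁ : List (Fin n)) (c : Fin n → ℤ), R.ValidFrom I c (l₁ ++ v :: l₂) →
      R.Sad I (l₁.foldl (R.fire I) c) v := by
  intro l₁
  induction l₁ with
  | nil => intro c h; exact h.1
  | cons a l ih =>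
    intro c h
    exact ih (R.fire I c a) h.2

end RootSystemBase

end Aux

/-- At each step `λ` of a valid firing sequence, the total number of chips
increases by exactly the `I`-height of the positive coroot `w_{λ-1}⁻¹(α_{i_λ}^∨)`, a strictly
positive integer. -/
theorem statement7 {n d : ℕ} (R : RootSystemBase n d) (I : Finset (Fin n))
    (l₁ l₂ : List (Fin n)) (v : Fin n)
    (h : R.Valid I (l₁ ++ v :: l₂)) :
    (∃ γ ∈ R.posRoots, (R.seqProd l₁)⁻¹ (rsCoroot (R.α v)) = rsCoroot γ) ∧
    (∑ u, R.play I (l₁ ++ [v]) u) - (∑ u, R.play I l₁ u) =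
      R.htI I ((R.seqProd l₁)⁻¹ (rsCoroot (R.α v))) ∧
    0 < R.htI I ((R.seqProd l₁)⁻¹ (rsCoroot (R.α v)))  := by
  have hsad : R.Sad I (R.play I l₁) v := R.sad_of_validFrom I l₂ v l₁ 0 h
  obtain ⟨k, hk, hb⟩ := R.main_inv I l₁ v
  have hht : R.htI I ((R.seqProd l₁)⁻¹ (rsCoroot (R.α v))) = ∑ j ∈ I, k j := R.htI_rep I hk
  have hsad' : 2 * R.play I l₁ v < R.chipBound I (R.play I l₁) v := hsad
  have hpos : 0 < ∑ j ∈ I, k j := by omega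
  refine ⟨?_, ?_, ?_⟩
  · -- positive root claim
    set γ := (R.seqProd l₁)⁻¹ (R.α v) with hγdef
    have hγΦ : γ ∈ R.Φ := R.seqProdInv_mem l₁ (R.α_mem v)
    have hco : (R.seqProd l₁)⁻¹ (rsCoroot (R.α v)) = rsCoroot γ := R.seqProdInv_coroot l₁ (R.α v)
    obtain ⟨c, hc, hsign⟩ := R.base γ hγΦ
    have hγ0 : γ ≠ 0 := R.nonzero _ hγΦ
    have hqγ : (0:ℝ) < ⟪γ, γ⟫ :=
      lt_of_le_of_ne real_inner_self_nonneg
        (fun hcc => hγ0 ((inner_self_eq_zero (𝕜 := ℝ)).mp hcc.symm))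
    -- two expansions of rsCoroot γ in the basis α
    have e1 : ∑ j, ((k j : ℝ) * (2 / ⟪R.α j, R.α j⟫)) • R.α j
        = ∑ j, ((c j : ℝ) * (2 / ⟪γ, γ⟫)) • R.α j := by
      have l1 : rsCoroot γ = ∑ j, ((k j : ℝ) * (2 / ⟪R.α j, R.α j⟫)) • R.α j := by
        rw [← hco, hk]
        refine Finset.sum_congr rfl fun j _ => ?_
        rw [rsCoroot, smul_smul]
      have l2 : rsCoroot γ = ∑ j, ((c j : ℝ) * (2 / ⟪γ, γ⟫)) • R.α j := by
        rw [rsCoroot, hc, Finset.smul_sum]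
        refine Finset.sum_congr rfl fun j _ => ?_
        rw [smul_smul, mul_comm]
      rw [← l1, ← l2]
    have hkc : ∀ j, (k j : ℝ) * (2 / ⟪R.α j, R.α j⟫) = (c j : ℝ) * (2 / ⟪γ, γ⟫) :=
      fun j => congrFun (R.alpha_coeff_unique e1) j
    obtain ⟨j0, hj0I, hj0⟩ : ∃ j ∈ I, 0 < k j := by
      by_contra hcon
      push_neg at hcon
      have : ∑ j ∈ I, k j ≤ 0 := Finset.sum_nonpos hcon
      omega
    have hqj0 : (0:ℝ) < ⟪R.α j0, R.α j0⟫ :=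
      lt_of_le_of_ne real_inner_self_nonneg
        (fun hcc => R.alpha_ne_zero j0 ((inner_self_eq_zero (𝕜 := ℝ)).mp hcc.symm))
    have hcj0 : (0:ℝ) < (c j0 : ℝ) := by
      have h1 : (0:ℝ) < (k j0 : ℝ) * (2 / ⟪R.α j0, R.α j0⟫) := by
        apply mul_pos
        · exact_mod_cast hj0
        · positivity
      rw [hkc j0] at h1
      have h2 : (0:ℝ) < 2 / ⟪γ, γ⟫ := by positivity
      nlinarith
    have hcj0' : 0 < c j0 := by exact_mod_cast hcj0
    have hallpos : ∀ i, 0 ≤ c i := by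
      rcases hsign with hs | hs
      · exact hs
      · exact absurd (hs j0) (by omega)
    refine ⟨γ, ?_, hco⟩
    rw [RootSystemBase.posRoots, Finset.mem_filter]
    exact ⟨hγΦ, c, hc, hallpos⟩
  · -- chip count difference
    rw [R.play_append_singleton, hht]
    have hsum : ∑ u, R.fire I (R.play I l₁) v u
        = (R.chipBound I (R.play I l₁) v - R.play I l₁ v)
          + ∑ u ∈ Finset.univ \ {v}, R.play I l₁ u := by
      rw [RootSystemBase.fire, Finset.sum_update_of_mem (Finset.mem_univ v)]
    have hsum2 : ∑ u, R.play I l₁ u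
        = R.play I l₁ v + ∑ u ∈ Finset.univ \ {v}, R.play I l₁ u := by
      rw [← Finset.sum_update_of_mem (Finset.mem_univ v), Function.update_eq_self]
    omega
  · rw [hht]; exact hpos
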